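/- arXiv:2407.05462 — 2 statements merged into one kernel-verified Lean document; each statement's English description precedes it below -/
import Mathlib

section
/- Timmesfeld's group SL₂(L) is perfect: it equals its own commutator subgroup. In fact A ⊆ [SL₂(L), SL₂(L)], via the identity [diag(s)⁻¹, a(t)] = a(t(1 − s²)) for s in the subgroup of Kˣ generated by L \ {0} and t ∈ L. -/
open Matrix Pointwise

noncomputable section

variable {K : Type*} [Field K]

abbrev SL2 (K : Type*) [Field K] := Matrix.SpecialLinearGroup (Fin 2) K

/-- `a(t) = [[1,t],[0,1]]`. -/
def aMat (t : K) : SL2 K :=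
  ⟨!![1, t; 0, 1], by simp [Matrix.det_fin_two_of]⟩

/-- `b(t) = [[1,0],[t,1]]`. -/
def bMat (t : K) : SL2 K :=
  ⟨!![1, 0; t, 1], by simp [Matrix.det_fin_two_of]⟩

/-- `diag(s) = [[s,0],[0,s⁻¹]]`. -/
def diagMat (s : Kˣ) : SL2 K :=
  ⟨!![(s : K), 0; 0, ((s⁻¹ : Kˣ) : K)], by simp [Matrix.det_fin_two_of]⟩

/-- `w = [[0,1],[1,0]]`, in `SL₂` since `char K = 2`. -/
def wMat (K : Type*) [Field K] [CharP K 2] : SL2 K :=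
  ⟨!![0, 1; 1, 0], by simp [Matrix.det_fin_two_of, CharTwo.neg_eq]⟩

def setA (L : AddSubgroup K) : Set (SL2 K) := {g | ∃ t ∈ L, g = aMat t}

def setAop (L : AddSubgroup K) : Set (SL2 K) := {g | ∃ t ∈ L, g = bMat t}

/-- Timmesfeld's `SL₂(L)`. -/
def SL2L (L : AddSubgroup K) : Subgroup (SL2 K) := Subgroup.closure (setA L ∪ setAop L)

/-- The subgroup of `Kˣ` generated by the nonzero elements of `L`. -/
def Tgen (L : AddSubgroup K) : Subgroup Kˣ := Subgroup.closure {u : Kˣ | (u : K) ∈ L}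

def setTL (L : AddSubgroup K) : Set (SL2 K) := {g | ∃ s ∈ Tgen L, g = diagMat s}

def setTK (K : Type*) [Field K] : Set (SL2 K) := {g | ∃ s : Kˣ, g = diagMat s}

def setB (L : AddSubgroup K) : Set (SL2 K) := setTL L * setA L

/- Auxiliary computational lemmas. -/

lemma aMat_mul (u v : K) : aMat u * aMat v = aMat (u + v) := by
  apply Subtype.ext
  simp only [Matrix.SpecialLinearGroup.coe_mul]
  simp [aMat, Matrix.mul_fin_two, add_comm]

lemma bMat_mul (u v : K) : bMat u * bMat v = bMat (u + v) := by
  apply Subtype.ext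
  simp only [Matrix.SpecialLinearGroup.coe_mul]
  simp [bMat, Matrix.mul_fin_two, add_comm]

lemma aMat_inv (t : K) : (aMat t)⁻¹ = aMat (-t) := by
  apply inv_eq_of_mul_eq_one_right
  rw [aMat_mul]
  apply Subtype.ext
  simp [aMat, Matrix.one_fin_two]

lemma bMat_inv (t : K) : (bMat t)⁻¹ = bMat (-t) := by
  apply inv_eq_of_mul_eq_one_right
  rw [bMat_mul]
  apply Subtype.ext
  simp [bMat, Matrix.one_fin_two]

lemma diag_inv (s : Kˣ) : (diagMat s)⁻¹ = diagMat s⁻¹ := by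
  apply inv_eq_of_mul_eq_one_right
  apply Subtype.ext
  simp only [Matrix.SpecialLinearGroup.coe_mul]
  simp [diagMat, Matrix.mul_fin_two, Matrix.one_fin_two]

lemma diag_conj_a (s : Kˣ) (u : K) :
    diagMat s * aMat u * (diagMat s)⁻¹ = aMat ((s : K) ^ 2 * u) := by
  rw [diag_inv]
  apply Subtype.ext
  simp only [Matrix.SpecialLinearGroup.coe_mul]
  simp [diagMat, aMat, Matrix.mul_fin_two]
  ring_nf

lemma diag_conj_b (s : Kˣ) (u : K) :
    diagMat s * bMat u * (diagMat s)⁻¹ = bMat (((s⁻¹ : Kˣ) : K) ^ 2 * u) := by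
  rw [diag_inv]
  apply Subtype.ext
  simp only [Matrix.SpecialLinearGroup.coe_mul]
  simp [diagMat, bMat, Matrix.mul_fin_two]
  ring_nf

lemma key_a (s : Kˣ) (t : K) :
    diagMat s * (aMat t)⁻¹ * (diagMat s)⁻¹ * aMat t = aMat (t * (1 - (s : K) ^ 2)) := by
  rw [aMat_inv, mul_assoc (diagMat s * aMat (-t)), ← mul_assoc, diag_conj_a, aMat_mul]
  ring_nf

lemma key_b (s : Kˣ) (t : K) :
    diagMat s * (bMat t)⁻¹ * (diagMat s)⁻¹ * bMat t = bMat (t * (1 - ((s⁻¹ : Kˣ) : K) ^ 2)) := by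
  rw [bMat_inv, mul_assoc (diagMat s * bMat (-t)), ← mul_assoc, diag_conj_b, bMat_mul]
  ring_nf

lemma diag_gen [CharP K 2] (s : Kˣ) :
    diagMat s = aMat (s : K) * bMat ((s⁻¹ : Kˣ) : K) * aMat (s : K) *
      (aMat 1 * bMat 1 * aMat 1) := by
  have h2 : (2 : K) = 0 := CharTwo.two_eq_zero
  have h3 : (3 : K) = 1 := by rw [show (3 : K) = 2 + 1 by norm_num, h2, zero_add]
  have h4 : (4 : K) = 0 := by rw [show (4 : K) = 2 * 2 by norm_num, h2, zero_mul]
  have h6 : (6 : K) = 0 := by rw [show (6 : K) = 2 * 3 by norm_num, h2, zero_mul]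
  apply Subtype.ext
  simp only [Matrix.SpecialLinearGroup.coe_mul]
  simp [diagMat, aMat, bMat, Matrix.mul_fin_two]
  ring_nf
  simp [h2, h3, h4, h6]

/-- Timmesfeld's group `SL₂(L)` is perfect: it equals its own commutator subgroup.
In fact `A ⊆ [SL₂(L), SL₂(L)]`, via the identity
`[diag(s)⁻¹, a(t)] = diag(s)·a(t)⁻¹·diag(s)⁻¹·a(t) = a(t(1 - s²))`
(commutator convention `[g,h] = g⁻¹h⁻¹gh`). -/
theorem SL2L_perfect
    [CharP K 2] (himperf : ¬ Function.Surjective fun x : K => x ^ 2)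
    (L : AddSubgroup K) (hsq : ∀ x : K, x ^ 2 ∈ L)
    (hvs : ∀ s t : K, t ∈ L → s ^ 2 * t ∈ L) :
    ⁅SL2L L, SL2L L⁆ = SL2L L ∧
      setA L ⊆ (⁅SL2L L, SL2L L⁆ : Subgroup (SL2 K)) ∧
      ∀ s : Kˣ, s ∈ Tgen L → ∀ t ∈ L,
        diagMat s * (aMat t)⁻¹ * (diagMat s)⁻¹ * aMat t = aMat (t * (1 - (s : K) ^ 2)) := by
  -- basic memberships
  have hmemA : ∀ t : K, t ∈ L → aMat t ∈ SL2L L := fun t ht =>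
    Subgroup.subset_closure (Or.inl ⟨t, ht, rfl⟩)
  have hmemB : ∀ t : K, t ∈ L → bMat t ∈ SL2L L := fun t ht =>
    Subgroup.subset_closure (Or.inr ⟨t, ht, rfl⟩)
  have h1L : (1 : K) ∈ L := by simpa using hsq 1
  -- a non-square element
  simp only [Function.Surjective, not_forall, not_exists] at himperf
  obtain ⟨c, hc⟩ := himperf
  have hc0 : c ≠ 0 := fun h => hc 0 (by simp [h])
  have hc1 : c ≠ 1 := fun h => hc 1 (by simp [h])
  set cu : Kˣ := Units.mk0 c hc0 with hcu
  set s : Kˣ := cu * cu with hs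
  have hsval : (s : K) = c ^ 2 := by simp [hs, hcu, sq]
  have hsinv : ((s⁻¹ : Kˣ) : K) = (c⁻¹) ^ 2 := by
    simp [hs, hcu, sq, mul_inv]
  -- diag s ∈ SL2L L
  have hsL : (s : K) ∈ L := by rw [hsval]; exact hsq c
  have hsinvL : ((s⁻¹ : Kˣ) : K) ∈ L := by rw [hsinv]; exact hsq c⁻¹
  have hdiag : diagMat s ∈ SL2L L := by
    rw [diag_gen]
    exact Subgroup.mul_mem _
      (Subgroup.mul_mem _ (Subgroup.mul_mem _ (hmemA _ hsL) (hmemB _ hsinvL)) (hmemA _ hsL))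
      (Subgroup.mul_mem _ (Subgroup.mul_mem _ (hmemA _ h1L) (hmemB _ h1L)) (hmemA _ h1L))
  -- char-two algebra
  have hfour : ∀ x : K, (1 - x) ^ 4 = 1 - x ^ 4 := by
    intro x
    rw [CharTwo.sub_eq_add, CharTwo.sub_eq_add,
      show (4 : ℕ) = 2 * 2 by norm_num, pow_mul, CharTwo.add_sq, one_pow,
      CharTwo.add_sq, one_pow, ← pow_mul]
  -- `setA L` is contained in the commutator subgroup
  have hAsub : setA L ⊆ (⁅SL2L L, SL2L L⁆ : Subgroup (SL2 K)) := by
    rintro g ⟨t, ht, rfl⟩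
    have he : (1 - c) ≠ 0 := sub_ne_zero.mpr (fun h => hc1 h.symm)
    set u : K := (((1 - c)⁻¹) ^ 2) ^ 2 * t with hu
    have huL : u ∈ L := hvs _ t ht
    have hx : ((1 : K) - c) ^ 4 ≠ 0 := pow_ne_zero _ he
    have hut : u * (1 - (s : K) ^ 2) = t := by
      rw [hsval, ← pow_mul, show 2 * 2 = 4 by norm_num, ← hfour, hu]
      have h1 : ((1 - c)⁻¹ ^ 2) ^ 2 = ((1 - c) ^ 4)⁻¹ := by
        rw [← pow_mul, show 2 * 2 = 4 by norm_num, inv_pow]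
      rw [h1]
      linear_combination t * inv_mul_cancel₀ hx
    have := Subgroup.commutator_mem_commutator hdiag
      ((SL2L L).inv_mem (hmemA u huL))
    rwa [commutatorElement_def, inv_inv, key_a, hut] at this
  -- `setAop L` is contained in the commutator subgroup
  have hBsub : setAop L ⊆ (⁅SL2L L, SL2L L⁆ : Subgroup (SL2 K)) := by
    rintro g ⟨t, ht, rfl⟩
    have hcinv1 : c⁻¹ ≠ 1 := fun h => hc1 (by
      have := congrArg (· * c) h
      simpa [inv_mul_cancel₀ hc0] using this.symm)
    have he : (1 - c⁻¹) ≠ 0 := sub_ne_zero.mpr (fun h => hcinv1 h.symm)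
    set u : K := (((1 - c⁻¹)⁻¹) ^ 2) ^ 2 * t with hu
    have huL : u ∈ L := hvs _ t ht
    have hx : ((1 : K) - c⁻¹) ^ 4 ≠ 0 := pow_ne_zero _ he
    have hut : u * (1 - ((s⁻¹ : Kˣ) : K) ^ 2) = t := by
      rw [hsinv, ← pow_mul, show 2 * 2 = 4 by norm_num, ← hfour, hu]
      have h1 : ((1 - c⁻¹)⁻¹ ^ 2) ^ 2 = ((1 - c⁻¹) ^ 4)⁻¹ := by
        rw [← pow_mul, show 2 * 2 = 4 by norm_num, inv_pow]
      rw [h1]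
      linear_combination t * inv_mul_cancel₀ hx
    have := Subgroup.commutator_mem_commutator hdiag
      ((SL2L L).inv_mem (hmemB u huL))
    rwa [commutatorElement_def, inv_inv, key_b, hut] at this
  refine ⟨?_, hAsub, fun s' _ t _ => key_a s' t⟩
  refine le_antisymm ?_ ?_
  · exact Subgroup.commutator_le.mpr fun g₁ h₁ g₂ h₂ =>
      Subgroup.mul_mem _ (Subgroup.mul_mem _ (Subgroup.mul_mem _ h₁ h₂)
        ((SL2L L).inv_mem h₁)) ((SL2L L).inv_mem h₂)
  · rw [SL2L, Subgroup.closure_le]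
    rintro g (hg | hg)
    · exact hAsub hg
    · exact hBsub hg

end
end

section
/- For t ∈ K, the upper unitriangular matrix a(t) = [[1,t],[0,1]] normalizes SL₂(L) (i.e. a(t)·SL₂(L)·a(t)⁻¹ = SL₂(L)) if and only if t ∈ L. -/
open Matrix Pointwise

noncomputable section

variable {K : Type*} [Field K]

/-! ### Auxiliary matrix identities -/

lemma aMat_mul_aMat (x y : K) : aMat x * aMat y = aMat (x + y) := by
  apply Subtype.ext; simp only [Matrix.SpecialLinearGroup.coe_mul]; ext i j
  fin_cases i <;> fin_cases j <;>
    simp [aMat, Matrix.mul_apply, Fin.sum_univ_two, add_comm]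

lemma aMat_zero : aMat (0:K) = 1 := by
  apply Subtype.ext; ext i j
  fin_cases i <;> fin_cases j <;> simp [aMat, Matrix.one_fin_two]

lemma aMat_self_inv [CharP K 2] (x : K) : (aMat x)⁻¹ = aMat x := by
  rw [inv_eq_iff_mul_eq_one, aMat_mul_aMat, CharTwo.add_self_eq_zero, aMat_zero]

lemma diagMat_mul (u v : Kˣ) : diagMat u * diagMat v = diagMat (u*v) := by
  apply Subtype.ext; simp only [Matrix.SpecialLinearGroup.coe_mul]; ext i j
  fin_cases i <;> fin_cases j <;>
    simp [diagMat, Matrix.mul_apply, Fin.sum_univ_two, mul_comm]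

lemma diagMat_one : diagMat (1 : Kˣ) = 1 := by
  apply Subtype.ext; ext i j
  fin_cases i <;> fin_cases j <;> simp [diagMat, Matrix.one_fin_two]

lemma diagMat_inv (u : Kˣ) : (diagMat u)⁻¹ = diagMat u⁻¹ := by
  rw [inv_eq_iff_mul_eq_one, diagMat_mul, mul_inv_cancel, diagMat_one]

lemma aMat_mul_diagMat (x : K) (v : Kˣ) :
    aMat x * diagMat v = diagMat v * aMat (((v⁻¹ : Kˣ) : K)^2 * x) := by
  apply Subtype.ext; simp only [Matrix.SpecialLinearGroup.coe_mul]; ext i j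
  fin_cases i <;> fin_cases j <;>
    simp [aMat, diagMat, Matrix.mul_apply, Fin.sum_univ_two] <;>
    field_simp <;> ring

lemma wMat_mul_wMat [CharP K 2] : wMat K * wMat K = 1 := by
  apply Subtype.ext; simp only [Matrix.SpecialLinearGroup.coe_mul]; ext i j
  fin_cases i <;> fin_cases j <;>
    simp [wMat, Matrix.mul_apply, Fin.sum_univ_two, Matrix.one_fin_two]

lemma wMat_inv [CharP K 2] : (wMat K)⁻¹ = wMat K := by
  rw [inv_eq_iff_mul_eq_one, wMat_mul_wMat]

lemma wMat_mul_diagMat [CharP K 2] (v : Kˣ) :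
    wMat K * diagMat v = diagMat v⁻¹ * wMat K := by
  apply Subtype.ext; simp only [Matrix.SpecialLinearGroup.coe_mul]; ext i j
  fin_cases i <;> fin_cases j <;>
    simp [wMat, diagMat, Matrix.mul_apply, Fin.sum_univ_two]

lemma wMat_aMat_wMat [CharP K 2] (y : K) : wMat K * aMat y * wMat K = bMat y := by
  apply Subtype.ext; simp only [Matrix.SpecialLinearGroup.coe_mul]; ext i j
  fin_cases i <;> fin_cases j <;>
    simp [wMat, aMat, bMat, Matrix.mul_apply, Fin.sum_univ_two]

lemma bMat_decomp [CharP K 2] (y : K) (hy : y ≠ 0) :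
    bMat y = aMat y⁻¹ * wMat K * diagMat (Units.mk0 y hy) * aMat y⁻¹ := by
  apply Subtype.ext; simp only [Matrix.SpecialLinearGroup.coe_mul]; ext i j
  fin_cases i <;> fin_cases j <;>
    simp [wMat, aMat, bMat, diagMat, Matrix.mul_apply, Fin.sum_univ_two,
      CharTwo.add_self_eq_zero] <;>
    field_simp <;> ring_nf <;>
    simp [CharTwo.two_eq_zero, CharTwo.add_self_eq_zero]

lemma a_b_a [CharP K 2] (u : Kˣ) :
    aMat (u:K) * bMat ((u⁻¹:Kˣ):K) * aMat (u:K) = wMat K * diagMat u⁻¹ := by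
  apply Subtype.ext; simp only [Matrix.SpecialLinearGroup.coe_mul]; ext i j
  fin_cases i <;> fin_cases j <;>
    simp [wMat, aMat, bMat, diagMat, Matrix.mul_apply, Fin.sum_univ_two,
      CharTwo.add_self_eq_zero]

/-! ### Facts about `L` -/

section Lfacts
variable (L : AddSubgroup K)

lemma one_mem_L (hsq : ∀ x : K, x ^ 2 ∈ L) : (1:K) ∈ L := by
  simpa using hsq 1

lemma inv_mem_L (hvs : ∀ s t : K, t ∈ L → s ^ 2 * t ∈ L) {y : K} (hy : y ∈ L) :
    y⁻¹ ∈ L := by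
  rcases eq_or_ne y 0 with rfl | h
  · simpa using L.zero_mem
  · have := hvs y⁻¹ y hy
    rwa [show (y⁻¹)^2 * y = y⁻¹ by field_simp] at this

end Lfacts

/-! ### The Bruhat-type decomposition -/

/-- Membership in `B = T_L · A`. -/
def inB (L : AddSubgroup K) (g : SL2 K) : Prop :=
  ∃ u ∈ Tgen L, ∃ y ∈ L, g = diagMat u * aMat y

/-- Membership in `B·w·B`. -/
def inBwB [CharP K 2] (L : AddSubgroup K) (g : SL2 K) : Prop :=
  ∃ p q : SL2 K, inB L p ∧ inB L q ∧ g = p * wMat K * q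

section Bfacts
variable {L : AddSubgroup K}

lemma inB_one : inB L (1 : SL2 K) :=
  ⟨1, one_mem _, 0, L.zero_mem, by rw [diagMat_one, aMat_zero, one_mul]⟩

lemma inB_aMat {y : K} (hy : y ∈ L) : inB L (aMat y) :=
  ⟨1, one_mem _, y, hy, by rw [diagMat_one, one_mul]⟩

lemma inB_diagMat {u : Kˣ} (hu : u ∈ Tgen L) : inB L (diagMat u) :=
  ⟨u, hu, 0, L.zero_mem, by rw [aMat_zero, mul_one]⟩

lemma inB_mul (hvs : ∀ s t : K, t ∈ L → s ^ 2 * t ∈ L) {g h : SL2 K}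
    (hg : inB L g) (hh : inB L h) : inB L (g * h) := by
  obtain ⟨u, hu, y, hy, rfl⟩ := hg
  obtain ⟨v, hv, z, hz, rfl⟩ := hh
  refine ⟨u * v, mul_mem hu hv, ((v⁻¹:Kˣ):K)^2 * y + z, L.add_mem (hvs _ _ hy) hz, ?_⟩
  rw [mul_assoc (diagMat u), ← mul_assoc (aMat y), aMat_mul_diagMat,
    mul_assoc, aMat_mul_aMat, ← mul_assoc, diagMat_mul]

lemma inB_inv [CharP K 2] (hvs : ∀ s t : K, t ∈ L → s ^ 2 * t ∈ L) {g : SL2 K}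
    (hg : inB L g) : inB L g⁻¹ := by
  obtain ⟨u, hu, y, hy, rfl⟩ := hg
  refine ⟨u⁻¹, inv_mem hu, ((u:K))^2 * y, hvs _ _ hy, ?_⟩
  rw [_root_.mul_inv_rev, aMat_self_inv, diagMat_inv, aMat_mul_diagMat]
  simp

end Bfacts

section Smax
variable [CharP K 2] {L : AddSubgroup K}

lemma inBwB_of_B_mul {g h : SL2 K} (hvs : ∀ s t : K, t ∈ L → s ^ 2 * t ∈ L)
    (hg : inB L g) (hh : inBwB L h) : inBwB L (g * h) := by
  obtain ⟨p, q, hp, hq, rfl⟩ := hh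
  exact ⟨g * p, q, inB_mul hvs hg hp, hq, by group⟩

lemma inBwB_of_mul_B {g h : SL2 K} (hvs : ∀ s t : K, t ∈ L → s ^ 2 * t ∈ L)
    (hg : inBwB L g) (hh : inB L h) : inBwB L (g * h) := by
  obtain ⟨p, q, hp, hq, rfl⟩ := hg
  exact ⟨p, q * h, hp, inB_mul hvs hq hh, by group⟩

/-- The key product computation: `w · (B element) · w`. -/
lemma w_B_w (hvs : ∀ s t : K, t ∈ L → s ^ 2 * t ∈ L) {g : SL2 K} (hg : inB L g) :
    inB L (wMat K * g * wMat K) ∨ inBwB L (wMat K * g * wMat K) := by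
  obtain ⟨u, hu, y, hy, rfl⟩ := hg
  have key : wMat K * (diagMat u * aMat y) * wMat K
      = diagMat u⁻¹ * (wMat K * aMat y * wMat K) := by
    rw [← mul_assoc, ← mul_assoc, wMat_mul_diagMat]; group
  rw [key, wMat_aMat_wMat]
  rcases eq_or_ne y 0 with rfl | hy0
  · left
    have : bMat (0:K) = 1 := by
      apply Subtype.ext; ext i j
      fin_cases i <;> fin_cases j <;> simp [bMat, Matrix.one_fin_two]
    rw [this, mul_one]
    exact inB_diagMat (inv_mem hu)
  · right
    rw [bMat_decomp y hy0]
    refine ⟨diagMat u⁻¹ * aMat y⁻¹, diagMat (Units.mk0 y hy0) * aMat y⁻¹,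
      ⟨u⁻¹, inv_mem hu, y⁻¹, inv_mem_L L hvs hy, rfl⟩,
      ⟨Units.mk0 y hy0, Subgroup.subset_closure hy, y⁻¹, inv_mem_L L hvs hy, rfl⟩, by group⟩

lemma inBwB_mul_inBwB (hvs : ∀ s t : K, t ∈ L → s ^ 2 * t ∈ L) {g h : SL2 K}
    (hg : inBwB L g) (hh : inBwB L h) : inB L (g * h) ∨ inBwB L (g * h) := by
  obtain ⟨p, q, hp, hq, rfl⟩ := hg
  obtain ⟨p', q', hp', hq', rfl⟩ := hh
  have hqp' : inB L (q * p') := inB_mul hvs hq hp'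
  have hmid := w_B_w hvs hqp'
  have heq : p * wMat K * q * (p' * wMat K * q')
      = p * (wMat K * (q * p') * wMat K) * q' := by group
  rw [heq]
  rcases hmid with hm | hm
  · left
    exact inB_mul hvs (inB_mul hvs hp hm) hq'
  · right
    exact inBwB_of_mul_B hvs (inBwB_of_B_mul hvs hp hm) hq'

lemma inBwB_inv (hvs : ∀ s t : K, t ∈ L → s ^ 2 * t ∈ L) {g : SL2 K}
    (hg : inBwB L g) : inBwB L g⁻¹ := by
  obtain ⟨p, q, hp, hq, rfl⟩ := hg
  refine ⟨q⁻¹, p⁻¹, inB_inv hvs hq, inB_inv hvs hp, ?_⟩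
  rw [_root_.mul_inv_rev, _root_.mul_inv_rev, wMat_inv]; group

/-- The candidate group `B ∪ BwB` as a subgroup. -/
def Smax (L : AddSubgroup K) (hvs : ∀ s t : K, t ∈ L → s ^ 2 * t ∈ L) :
    Subgroup (SL2 K) where
  carrier := {g | inB L g ∨ inBwB L g}
  one_mem' := Or.inl inB_one
  mul_mem' := by
    rintro g h (hg | hg) (hh | hh)
    · exact Or.inl (inB_mul hvs hg hh)
    · exact Or.inr (inBwB_of_B_mul hvs hg hh)
    · exact Or.inr (inBwB_of_mul_B hvs hg hh)
    · exact inBwB_mul_inBwB hvs hg hh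
  inv_mem' := by
    rintro g (hg | hg)
    · exact Or.inl (inB_inv hvs hg)
    · exact Or.inr (inBwB_inv hvs hg)

lemma SL2L_le_Smax (hvs : ∀ s t : K, t ∈ L → s ^ 2 * t ∈ L) :
    SL2L L ≤ Smax L hvs := by
  rw [SL2L, Subgroup.closure_le]
  rintro g (⟨t, ht, rfl⟩ | ⟨t, ht, rfl⟩)
  · exact Or.inl (inB_aMat ht)
  · rcases eq_or_ne t 0 with rfl | ht0
    · left
      have : bMat (0:K) = 1 := by
        apply Subtype.ext; ext i j
        fin_cases i <;> fin_cases j <;> simp [bMat, Matrix.one_fin_two]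
      rw [this]; exact inB_one
    · right
      rw [bMat_decomp t ht0]
      exact ⟨aMat t⁻¹, diagMat (Units.mk0 t ht0) * aMat t⁻¹,
        inB_aMat (inv_mem_L L hvs ht),
        ⟨Units.mk0 t ht0, Subgroup.subset_closure ht, t⁻¹, inv_mem_L L hvs ht, rfl⟩, by group⟩

/-- Entries of a `BwB` element. -/
lemma BwB_entries {g : SL2 K} (hg : inBwB L g) :
    ∃ u v : Kˣ, ∃ y z : K, y ∈ L ∧
      (g : Matrix (Fin 2) (Fin 2) K) 0 0 = (u:K) * y * (v:K) ∧
      (g : Matrix (Fin 2) (Fin 2) K) 1 0 = ((u⁻¹:Kˣ):K) * (v:K) := by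
  obtain ⟨p, q, ⟨u, hu, y, hy, rfl⟩, ⟨v, hv, z, hz, rfl⟩, rfl⟩ := hg
  refine ⟨u, v, y, z, hy, ?_, ?_⟩ <;>
  · show ((diagMat u * aMat y * wMat K * (diagMat v * aMat z) : SL2 K) :
      Matrix (Fin 2) (Fin 2) K) _ _ = _
    simp only [Matrix.SpecialLinearGroup.coe_mul]
    simp only [Matrix.SpecialLinearGroup.coe_mul, aMat, diagMat, wMat]
    simp [Matrix.mul_apply, Fin.sum_univ_two]
    try ring

/-- The key extraction: elements of `SL2L` with nonzero lower-left entry satisfy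
`a·c⁻¹ ∈ L`. -/
lemma entry_ratio_mem (hvs : ∀ s t : K, t ∈ L → s ^ 2 * t ∈ L) {g : SL2 K}
    (hg : g ∈ SL2L L) (hc : (g : Matrix (Fin 2) (Fin 2) K) 1 0 ≠ 0) :
    (g : Matrix (Fin 2) (Fin 2) K) 0 0 * ((g : Matrix (Fin 2) (Fin 2) K) 1 0)⁻¹ ∈ L := by
  rcases SL2L_le_Smax hvs hg with hB | hBwB
  · exfalso
    obtain ⟨u, hu, y, hy, rfl⟩ := hB
    apply hc
    show ((diagMat u * aMat y : SL2 K) : Matrix (Fin 2) (Fin 2) K) 1 0 = 0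
    simp only [Matrix.SpecialLinearGroup.coe_mul]
    simp [Matrix.SpecialLinearGroup.coe_mul, aMat, diagMat, Matrix.mul_apply,
      Fin.sum_univ_two]
  · obtain ⟨u, v, y, z, hy, h00, h10⟩ := BwB_entries hBwB
    rw [h00, h10]
    have : (u:K) * y * (v:K) * (((u⁻¹:Kˣ):K) * (v:K))⁻¹ = ((u:K))^2 * y := by
      have hv : (v:K) ≠ 0 := v.ne_zero
      have hu : (u:K) ≠ 0 := u.ne_zero
      simp only [Units.val_inv_eq_inv_val]
      field_simp
    rw [this]
    exact hvs _ _ hy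

end Smax

/-! ### Generators of `SL2L` -/

section Gens
variable [CharP K 2] {L : AddSubgroup K}

lemma aMat_mem_SL2L {t : K} (ht : t ∈ L) : aMat t ∈ SL2L L :=
  Subgroup.subset_closure (Or.inl ⟨t, ht, rfl⟩)

lemma bMat_mem_SL2L {t : K} (ht : t ∈ L) : bMat t ∈ SL2L L :=
  Subgroup.subset_closure (Or.inr ⟨t, ht, rfl⟩)

end Gens

/-- For `t ∈ K`, the unitriangular matrix `a(t)` normalizes `SL₂(L)` iff `t ∈ L`. -/
theorem aMat_normalizes_SL2L_iff
    [CharP K 2] (himperf : ¬ Function.Surjective fun x : K => x ^ 2)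
    (L : AddSubgroup K) (hsq : ∀ x : K, x ^ 2 ∈ L)
    (hvs : ∀ s t : K, t ∈ L → s ^ 2 * t ∈ L) :
    ∀ t : K,
      (fun g => aMat t * g * (aMat t)⁻¹) '' (SL2L L : Set (SL2 K)) = (SL2L L : Set (SL2 K)) ↔
        t ∈ L := by
  intro t
  constructor
  · intro h
    have h1 : (1:K) ∈ L := one_mem_L L hsq
    have hb : bMat (1:K) ∈ SL2L L := bMat_mem_SL2L h1
    have hmem : aMat t * bMat 1 * (aMat t)⁻¹ ∈ SL2L L := by
      have : aMat t * bMat 1 * (aMat t)⁻¹ ∈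
          (fun g => aMat t * g * (aMat t)⁻¹) '' (SL2L L : Set (SL2 K)) :=
        ⟨bMat 1, hb, rfl⟩
      rwa [h] at this
    set g := aMat t * bMat 1 * (aMat t)⁻¹ with hgdef
    have hgval : (g : Matrix (Fin 2) (Fin 2) K) = !![1 + t, t^2; 1, 1 + t] := by
      rw [hgdef, aMat_self_inv]
      show ((aMat t * bMat 1 * aMat t : SL2 K) : Matrix (Fin 2) (Fin 2) K) = _
      simp only [Matrix.SpecialLinearGroup.coe_mul]
      simp only [Matrix.SpecialLinearGroup.coe_mul, aMat, bMat]
      ext i j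
      fin_cases i <;> fin_cases j <;>
        simp [Matrix.mul_apply, Fin.sum_univ_two] <;> ring_nf <;>
        simp [CharTwo.two_eq_zero]
    have hc : (g : Matrix (Fin 2) (Fin 2) K) 1 0 ≠ 0 := by
      rw [hgval]; simp
    have hratio := entry_ratio_mem hvs hmem hc
    rw [hgval] at hratio
    simp at hratio
    have ht' : t = (1 + t) + 1 := by
      rw [add_comm 1 t, add_assoc, CharTwo.add_self_eq_zero, add_zero]
    rw [ht']
    exact L.add_mem hratio h1
  · intro ht
    have ha : aMat t ∈ SL2L L := aMat_mem_SL2L ht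
    ext x
    simp only [Set.mem_image, SetLike.mem_coe]
    constructor
    · rintro ⟨y, hy, rfl⟩
      exact mul_mem (mul_mem ha hy) (inv_mem ha)
    · intro hx
      exact ⟨(aMat t)⁻¹ * x * aMat t,
        mul_mem (mul_mem (inv_mem ha) hx) ha, by group⟩

end
end
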